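/- Assume char F ≠ 2 and let f be a derivation of N. Then for every A ∈ N^{12} and all indices r, s with (b r, b s) = (3, t), the entry f(A) r s is zero; and for every A ∈ N^{t−1,t} and all indices r, s with (b r, b s) = (1, t−2), the entry f(A) r s is zero. -/

import Mathlib

/-- `A` is a strictly block upper triangular matrix relative to the block function `b`
(index `r` lies in block `b r`): `A r s = 0` whenever `b r ≥ b s`. -/
def InN {F : Type*} [Field F] {n : ℕ} (b : Fin n → ℕ)
    (A : Matrix (Fin n) (Fin n) F) : Prop :=
  ∀ r s, b s ≤ b r → A r s = 0

/-- `A` lies in the `(i,j)` block `N^{ij}`: `A r s = 0` unless `b r = i` and `b s = j`. -/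
def InBlk {F : Type*} [Field F] {n : ℕ} (b : Fin n → ℕ) (i j : ℕ)
    (A : Matrix (Fin n) (Fin n) F) : Prop :=
  ∀ r s, ¬(b r = i ∧ b s = j) → A r s = 0

/-- `f` is a derivation of the Lie algebra `N` of strictly block upper triangular matrices:
it maps `N` into `N` and satisfies `f [X,Y] = [f X, Y] + [X, f Y]` on `N`,
where `[X,Y] = XY - YX`. -/
def IsDerN {F : Type*} [Field F] {n : ℕ} (b : Fin n → ℕ)
    (f : Matrix (Fin n) (Fin n) F →ₗ[F] Matrix (Fin n) (Fin n) F) : Prop :=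
  (∀ A, InN b A → InN b (f A)) ∧
  ∀ X Y, InN b X → InN b Y →
    f (X * Y - Y * X) = (f X * Y - Y * f X) + (X * f Y - f Y * X)

lemma mulZ {F : Type*} [Field F] {n : ℕ} (X Y : Matrix (Fin n) (Fin n) F) (r s : Fin n)
    (h : ∀ k, X r k = 0 ∨ Y k s = 0) : (X * Y) r s = 0 := by
  rw [Matrix.mul_apply]
  exact Finset.sum_eq_zero fun k _ => by rcases h k with h | h <;> simp [h]

lemma sandwich {F : Type*} [Field F] {n : ℕ} (X Y : Matrix (Fin n) (Fin n) F) (k0 q r s : Fin n) :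
    (X * (Matrix.single k0 q (1:F) * Y)) r s = X r k0 * Y q s := by
  rw [Matrix.mul_apply]
  rw [Finset.sum_eq_single_of_mem k0 (Finset.mem_univ _)]
  · rw [Matrix.single_mul_apply_same, one_mul]
  · intro k _ hk
    rw [Matrix.single_mul_apply_of_ne (c := (1:F)) (i := k0) (j := q) (a := k) (b := s) (h := hk), mul_zero]

/-- when `char F ≠ 2`, for a derivation `f` of `N`, the `(3,t)` block of
`f(N^{12})` and the `(1,t-2)` block of `f(N^{t-1,t})` vanish. -/
theorem stmt6 {F : Type*} [Field F] {n t : ℕ} (b : Fin n → ℕ)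
    (hn : 1 ≤ n) (ht : 3 ≤ t) (hmono : Monotone b)
    (hlb : ∀ r, 1 ≤ b r) (hub : ∀ r, b r ≤ t)
    (hsurj : ∀ k, 1 ≤ k → k ≤ t → ∃ r, b r = k)
    (hchar : ringChar F ≠ 2)
    (f : Matrix (Fin n) (Fin n) F →ₗ[F] Matrix (Fin n) (Fin n) F)
    (hf : IsDerN b f) :
    (∀ A, InBlk b 1 2 A → ∀ r s, b r = 3 → b s = t → f A r s = 0) ∧
    (∀ A, InBlk b (t - 1) t A → ∀ r s, b r = 1 → b s = t - 2 → f A r s = 0) := by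
  obtain ⟨hN, hD⟩ := hf
  have h2ne : (2:F) ≠ 0 := Ring.two_ne_zero hchar
  constructor
  · -- Part 1
    intro A hA r s hbr hbs
    by_cases hA0 : A = 0
    · simp [hA0]
    have hex : ∃ p k, A p k ≠ 0 := by
      by_contra h
      push_neg at h
      exact hA0 (by ext p k; simp [h])
    obtain ⟨p, k0, hpk⟩ := hex
    have hblk : b p = 1 ∧ b k0 = 2 := by
      by_contra h; exact hpk (hA p k0 h)
    obtain ⟨hbp, hbk0⟩ := hblk
    set B : Matrix (Fin n) (Fin n) F := Matrix.single k0 r (1:F) with hBdef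
    have hArow : ∀ u, b u ≠ 1 → ∀ v, A u v = 0 := fun u hu v => hA u v (by tauto)
    have hAcol : ∀ v, b v ≠ 2 → ∀ u, A u v = 0 := fun v hv u => hA u v (by tauto)
    have hAN : InN b A := by
      intro u v huv
      by_cases hc : b u = 1 ∧ b v = 2
      · exact absurd huv (by omega)
      · exact hA u v hc
    have hBN : InN b B := by
      intro u v huv
      by_cases hc : k0 = u ∧ r = v
      · exfalso
        obtain ⟨h1, h2⟩ := hc
        subst h1; subst h2
        omega
      · exact Matrix.single_apply_of_ne k0 r 1 u v hc
    have hBA : B * A = 0 := by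
      ext u v
      rw [Matrix.zero_apply]
      apply mulZ
      intro k
      by_cases hc : k0 = u ∧ r = k
      · right
        exact hArow k (by rw [← hc.2]; omega) v
      · left
        exact Matrix.single_apply_of_ne k0 r 1 u k hc
    have hAA : A * A = 0 := by
      ext u v
      rw [Matrix.zero_apply]
      apply mulZ
      intro k
      by_cases hk : b k = 2
      · right; exact hArow k (by omega) v
      · left; exact hAcol k hk u
    have hABN : InN b (A * B) := by
      intro u v huv
      apply mulZ
      intro k
      by_cases hc : k0 = k ∧ r = v
      · left
        exact hArow u (by rw [← hc.2] at huv; omega) k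
      · right
        exact Matrix.single_apply_of_ne k0 r 1 k v hc
    have hD1 := hD A B hAN hBN
    rw [hBA, sub_zero] at hD1
    have hzero : A * (A * B) - (A * B) * A = 0 := by
      have e1 : A * (A * B) = 0 := by rw [← mul_assoc, hAA, zero_mul]
      have e2 : (A * B) * A = 0 := by rw [mul_assoc, hBA, mul_zero]
      rw [e1, e2, sub_zero]
    have hD2 := hD A (A * B) hAN hABN
    rw [hzero, map_zero, hD1] at hD2
    simp only [mul_sub, mul_add, sub_mul, add_mul] at hD2
    have hent := congrArg (fun M => M p s) hD2
    simp only [Matrix.add_apply, Matrix.sub_apply, Matrix.zero_apply] at hent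
    -- entry computations
    have hAcolS : ∀ u, A u s = 0 := hAcol s (by omega)
    have e1 : (f A * (A * B)) p s = 0 := by
      apply mulZ
      intro k
      by_cases hk : b k ≤ 1
      · left; exact hN A hAN p k (by omega)
      · right
        apply mulZ
        intro l
        left; exact hArow k (by omega) l
    have e2 : ((A * B) * f A) p s = A p k0 * f A r s := by
      rw [mul_assoc]; exact sandwich A (f A) k0 r p s
    have e3 : (A * (f A * B)) p s = 0 := by
      apply mulZ
      intro k
      by_cases hk : 2 ≤ b k
      · right
        apply mulZ
        intro l
        by_cases hc : k0 = l ∧ r = s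
        · left
          exact hN A hAN k l (by rw [← hc.1]; omega)
        · right
          exact Matrix.single_apply_of_ne k0 r 1 l s hc
      · left; exact hAcol k (by omega) p
    have e4 : (A * (B * f A)) p s = A p k0 * f A r s := sandwich A (f A) k0 r p s
    have e5 : (A * (A * f B)) p s = 0 := by
      rw [← mul_assoc, hAA, zero_mul, Matrix.zero_apply]
    have e6 : (A * (f B * A)) p s = 0 := by
      apply mulZ
      intro k
      right
      apply mulZ
      intro l
      right; exact hAcolS l
    have e7 : ((f A * B) * A) p s = 0 := by
      rw [mul_assoc, hBA, mul_zero, Matrix.zero_apply]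
    have e8 : ((B * f A) * A) p s = 0 := by
      apply mulZ
      intro k
      right; exact hAcolS k
    have e9 : ((A * f B) * A) p s = 0 := by
      apply mulZ
      intro k
      right; exact hAcolS k
    have e10 : ((f B * A) * A) p s = 0 := by
      rw [mul_assoc, hAA, mul_zero, Matrix.zero_apply]
    rw [e1, e2, e3, e4, e5, e6, e7, e8, e9, e10] at hent
    have h2P : A p k0 * f A r s * 2 = 0 := by linear_combination hent
    rcases mul_eq_zero.mp h2P with hP | hP
    · rcases mul_eq_zero.mp hP with h | h
      · exact absurd h hpk
      · exact h
    · exact absurd hP h2ne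
  · -- Part 2
    intro A hA r s hbr hbs
    by_cases hA0 : A = 0
    · simp [hA0]
    have hex : ∃ p k, A p k ≠ 0 := by
      by_contra h
      push_neg at h
      exact hA0 (by ext p k; simp [h])
    obtain ⟨k0, s0, hpk⟩ := hex
    have hblk : b k0 = t - 1 ∧ b s0 = t := by
      by_contra h; exact hpk (hA k0 s0 h)
    obtain ⟨hbk0, hbs0⟩ := hblk
    set B : Matrix (Fin n) (Fin n) F := Matrix.single s k0 (1:F) with hBdef
    have hArow : ∀ u, b u ≠ t - 1 → ∀ v, A u v = 0 := fun u hu v => hA u v (by tauto)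
    have hAcol : ∀ v, b v ≠ t → ∀ u, A u v = 0 := fun v hv u => hA u v (by tauto)
    have hAN : InN b A := by
      intro u v huv
      by_cases hc : b u = t - 1 ∧ b v = t
      · exact absurd huv (by omega)
      · exact hA u v hc
    have hBN : InN b B := by
      intro u v huv
      by_cases hc : s = u ∧ k0 = v
      · exfalso
        obtain ⟨h1, h2⟩ := hc
        subst h1; subst h2
        omega
      · exact Matrix.single_apply_of_ne s k0 1 u v hc
    have hAB : A * B = 0 := by
      ext u v
      rw [Matrix.zero_apply]
      apply mulZ
      intro k
      by_cases hc : s = k ∧ k0 = v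
      · left
        exact hAcol k (by rw [← hc.1]; omega) u
      · right
        exact Matrix.single_apply_of_ne s k0 1 k v hc
    have hAA : A * A = 0 := by
      ext u v
      rw [Matrix.zero_apply]
      apply mulZ
      intro k
      by_cases hk : b k = t
      · right; exact hArow k (by omega) v
      · left; exact hAcol k hk u
    have hBAN : InN b (B * A) := by
      intro u v huv
      apply mulZ
      intro k
      by_cases hc : s = u ∧ k0 = k
      · right
        exact hAcol v (by rw [← hc.1] at huv; omega) k
      · left
        exact Matrix.single_apply_of_ne s k0 1 u k hc
    have hD1 := hD B A hBN hAN
    rw [hAB, sub_zero] at hD1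
    have hzero : A * (B * A) - (B * A) * A = 0 := by
      have e1 : A * (B * A) = 0 := by rw [← mul_assoc, hAB, zero_mul]
      have e2 : (B * A) * A = 0 := by rw [mul_assoc, hAA, mul_zero]
      rw [e1, e2, sub_zero]
    have hD2 := hD A (B * A) hAN hBAN
    rw [hzero, map_zero, hD1] at hD2
    simp only [mul_sub, mul_add, sub_mul, add_mul] at hD2
    have hent := congrArg (fun M => M r s0) hD2
    simp only [Matrix.add_apply, Matrix.sub_apply, Matrix.zero_apply] at hent
    have hArowR : ∀ v, A r v = 0 := hArow r (by omega)
    have g1 : (f A * (B * A)) r s0 = f A r s * A k0 s0 := sandwich (f A) A s k0 r s0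
    have g2 : ((B * A) * f A) r s0 = 0 := by
      rw [mul_assoc]
      apply mulZ
      intro k
      right
      apply mulZ
      intro l
      by_cases hl : b l = t
      · right; exact hN A hAN l s0 (by omega)
      · left; exact hAcol l hl k
    have g3 : (A * (f B * A)) r s0 = 0 := mulZ _ _ _ _ fun k => Or.inl (hArowR k)
    have g4 : (A * (A * f B)) r s0 = 0 := mulZ _ _ _ _ fun k => Or.inl (hArowR k)
    have g5 : (A * (B * f A)) r s0 = 0 := mulZ _ _ _ _ fun k => Or.inl (hArowR k)
    have g6 : (A * (f A * B)) r s0 = 0 := mulZ _ _ _ _ fun k => Or.inl (hArowR k)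
    have g7 : ((f B * A) * A) r s0 = 0 := by
      rw [mul_assoc, hAA, mul_zero, Matrix.zero_apply]
    have g8 : ((A * f B) * A) r s0 = 0 := by
      apply mulZ
      intro k
      left
      exact mulZ _ _ _ _ fun l => Or.inl (hArowR l)
    have g9 : ((B * f A) * A) r s0 = 0 := by
      apply mulZ
      intro k
      by_cases hk : b k = t - 1
      · left
        apply mulZ
        intro l
        by_cases hc : s = r ∧ k0 = l
        · right
          exact hN A hAN l k (by rw [← hc.2]; omega)
        · left
          exact Matrix.single_apply_of_ne s k0 1 r l hc
      · right
        exact hArow k hk s0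
    have g10 : ((f A * B) * A) r s0 = f A r s * A k0 s0 := by
      rw [mul_assoc]; exact sandwich (f A) A s k0 r s0
    rw [g1, g2, g3, g4, g5, g6, g7, g8, g9, g10] at hent
    have h2P : f A r s * A k0 s0 * 2 = 0 := by linear_combination -hent
    rcases mul_eq_zero.mp h2P with hP | hP
    · rcases mul_eq_zero.mp hP with h | h
      · exact h
      · exact absurd h hpk
    · exact absurd hP h2ne
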